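/- arXiv:1412.6171 — 2 statements merged into one kernel-verified Lean document; each statement's English description precedes it below -/
import Mathlib

section
/- (Eklof's Lemma.) Let A be an abelian category and A an object of A. Then the class ⊥1{A} = {X : Ext^1(X, A) = 0} is closed under ⊥1{A}-filtered objects: if an object B is ⊥1{A}-filtered, i.e. 0 → B is the transfinite composition of a λ-sequence X with X_0 = 0 in which each X_α → X_{α+1} (α+1 < λ) is a monomorphism whose cokernel lies in ⊥1{A}, then Ext^1(B, A) = 0. -/
open CategoryTheory CategoryTheory.Limits

universe w v u

namespace CellComplex

variable {C : Type u} [Category.{v} C]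

/-- The inclusion of `Set.Iio g` into `Set.Iio l` for `g ≤ l`, as a functor. -/
def iioFunctor {g l : Ordinal.{w}} (h : g ≤ l) : Set.Iio g ⥤ Set.Iio l :=
  Monotone.functor (f := fun a => (⟨a.1, lt_of_lt_of_le a.2 h⟩ : Set.Iio l))
    (fun _ _ hab => hab)

/-- For `g < l`, the canonical cocone over the restriction of `X : Set.Iio l ⥤ C` to
`Set.Iio g` whose point is `X.obj ⟨g, _⟩`. -/
def coconeAt {l : Ordinal.{w}} (X : Set.Iio l ⥤ C) {g : Ordinal.{w}} (h : g < l) :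
    Cocone (iioFunctor h.le ⋙ X) where
  pt := X.obj ⟨g, h⟩
  ι :=
    { app := fun a => X.map (homOfLE (le_of_lt a.2))
      naturality := fun a b f => by
        dsimp [iioFunctor, Monotone.functor]
        rw [Category.comp_id, ← X.map_comp]
        congr 1 }

/-- A functor `X : Set.Iio l ⥤ C` is a `λ`-sequence if for every limit ordinal `g < l`,
the object `X.obj g` together with the canonical maps is a colimit of the restriction of
`X` to `Set.Iio g`. -/
def IsLambdaSequence {l : Ordinal.{w}} (X : Set.Iio l ⥤ C) : Prop :=
  ∀ (g : Ordinal.{w}) (h : g < l), Order.IsSuccLimit g → Nonempty (IsColimit (coconeAt X h))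

/-- The canonical morphism in the preorder category `Set.Iio l` from `a` to `a + 1`. -/
def toSucc {l : Ordinal.{w}} (a : Ordinal.{w}) (ha : a + 1 < l) :
    (⟨a, (lt_add_one a).trans ha⟩ : Set.Iio l) ⟶ (⟨a + 1, ha⟩ : Set.Iio l) :=
  homOfLE (le_of_lt (lt_add_one a))

/-- All the successor maps of the sequence `X` satisfy the property `P`. -/
def SuccMapsIn (P : MorphismProperty C) {l : Ordinal.{w}} (X : Set.Iio l ⥤ C) : Prop :=
  ∀ (a : Ordinal.{w}) (ha : a + 1 < l), P (X.map (toSucc a ha))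

/-- `f : A ⟶ B` is a transfinite composition of a `λ`-sequence whose successor maps
satisfy `P`: there is such a sequence starting (up to isomorphism) at `A`, having a
colimit cocone whose point is isomorphic to `B` compatibly with `f`. -/
def IsTransCompOf (P : MorphismProperty C) {A B : C} (f : A ⟶ B) : Prop :=
  ∃ (l : Ordinal.{w}) (hl : 0 < l) (X : Set.Iio l ⥤ C),
    IsLambdaSequence X ∧ SuccMapsIn P X ∧
      ∃ (c : Cocone X) (_ : IsColimit c) (e₀ : A ≅ X.obj ⟨0, hl⟩) (e₁ : c.pt ≅ B),
        f = e₀.hom ≫ c.ι.app ⟨0, hl⟩ ≫ e₁.hom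

/-- `f` is a pushout of some morphism satisfying `I`, i.e. `f` is the parallel side of a
pushout square whose other side is a morphism of `I`. -/
def IsPushoutOfIn (I : MorphismProperty C) {X Y : C} (f : X ⟶ Y) : Prop :=
  ∃ (A B : C) (d : A ⟶ B) (g : A ⟶ X) (h : B ⟶ Y), I d ∧ IsPushout d g h f

/-- The class of pushouts of morphisms in `I`. -/
def pushouts (I : MorphismProperty C) : MorphismProperty C :=
  fun _ _ f => IsPushoutOfIn I f

/-- Transfinite compositions of pushouts of morphisms in `I` exist: pushouts of
morphisms of `I` along arbitrary morphisms exist, and every `λ`-sequence whose successor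
maps are pushouts of morphisms of `I` has a colimit. -/
def HasTransfiniteCompositionsOfPushouts (I : MorphismProperty C) : Prop :=
  (∀ ⦃A B : C⦄ (d : A ⟶ B), I d → ∀ ⦃X : C⦄ (g : A ⟶ X),
      ∃ (Y : C) (h : B ⟶ Y) (f : X ⟶ Y), IsPushout d g h f) ∧
    (∀ (l : Ordinal.{w}) (X : Set.Iio l ⥤ C), IsLambdaSequence X →
      SuccMapsIn (pushouts I) X → HasColimit X)

/-- The class `I`-cell of relative `I`-cell complexes: transfinite compositions of
pushouts of morphisms of `I`. -/
def cell (I : MorphismProperty C) : MorphismProperty C :=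
  fun _ _ f => IsTransCompOf.{w} (pushouts I) f

/-- The class `I`-inj of morphisms having the right lifting property with respect to
every morphism of `I`. -/
def inj (I : MorphismProperty C) : MorphismProperty C :=
  fun _ _ p => ∀ ⦃A B : C⦄ (i : A ⟶ B), I i → HasLiftingProperty i p

/-- The class `I`-cof of morphisms having the left lifting property with respect to
every morphism of `I`-inj. -/
def cof (I : MorphismProperty C) : MorphismProperty C :=
  fun _ _ i => ∀ ⦃X Y : C⦄ (p : X ⟶ Y), inj I p → HasLiftingProperty i p

/-- Coproducts of set-indexed families of morphisms in `I` exist: for every set-indexed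
family of morphisms of `I`, the coproducts of the domains and of the codomains exist. -/
def HasCoproductsOfMorphisms (I : MorphismProperty C) : Prop :=
  ∀ (S : Type w) (A B : S → C) (i : ∀ s, A s ⟶ B s), (∀ s, I (i s)) →
    HasCoproduct A ∧ HasCoproduct B

/-- An object `A` is `κ`-small relative to a class `D` of morphisms: for every ordinal
`l` of cofinality `> κ` and every `λ`-sequence with successor maps in `D` admitting a
colimit, the canonical map `colimᵢ Hom(A, Xᵢ) ⟶ Hom(A, colimᵢ Xᵢ)` is bijective, i.e.
every morphism from `A` to the colimit factors through some stage, and any two morphisms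
to a stage which agree in the colimit agree at some later stage. -/
def IsSmallRelativeTo (κ : Cardinal.{w}) (D : MorphismProperty C) (A : C) : Prop :=
  ∀ (l : Ordinal.{w}), κ < l.cof → ∀ (X : Set.Iio l ⥤ C), IsLambdaSequence X →
    SuccMapsIn D X → ∀ (c : Cocone X), IsColimit c →
      ((∀ u : A ⟶ c.pt, ∃ (a : Set.Iio l) (v : A ⟶ X.obj a), v ≫ c.ι.app a = u) ∧
        (∀ (a : Set.Iio l) (v₁ v₂ : A ⟶ X.obj a), v₁ ≫ c.ι.app a = v₂ ≫ c.ι.app a →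
          ∃ (b : Set.Iio l) (hab : a ≤ b),
            v₁ ≫ X.map (homOfLE hab) = v₂ ≫ X.map (homOfLE hab)))

/-- The set `I` of morphisms admits the small object argument: (i) transfinite
compositions of pushouts of morphisms in `I` exist, (ii) coproducts of set-indexed
families of morphisms in `I` exist, and (iii) the domains of the morphisms of `I` are
small relative to `I`-cell. -/
def AdmitsSmallObjectArgument (I : MorphismProperty C) : Prop :=
  HasTransfiniteCompositionsOfPushouts.{w} I ∧ HasCoproductsOfMorphisms.{w} I ∧
    ∀ ⦃A B : C⦄ (i : A ⟶ B), I i →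
      ∃ κ : Cardinal.{w}, IsSmallRelativeTo κ (cell.{w} I) A

section AbelianComplete

open ZeroObject

variable {C : Type u} [Category.{v} C] [Abelian C]

/-- `0 → A → B → C' → 0` is a short exact sequence. -/
def IsShortExact {A B C' : C} (f : A ⟶ B) (g : B ⟶ C') : Prop :=
  ∃ w : f ≫ g = 0, (ShortComplex.mk f g w).ShortExact

/-- `Ext¹(X, A) = 0`, expressed by the vanishing of the Yoneda Ext group: every short
exact sequence `0 → A → E → X → 0` splits. -/
def Ext1Zero (X A : C) : Prop :=
  ∀ ⦃E : C⦄ (f : A ⟶ E) (g : E ⟶ X), IsShortExact f g → ∃ s : X ⟶ E, s ≫ g = 𝟙 X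

/-- The right `Ext¹`-orthogonal `S^⊥₁` of a class of objects `S`. -/
def rightPerp (S : Set C) : Set C := {Y | ∀ X ∈ S, Ext1Zero X Y}

/-- The left `Ext¹`-orthogonal `⊥₁S` of a class of objects `S`. -/
def leftPerp (S : Set C) : Set C := {X | ∀ Y ∈ S, Ext1Zero X Y}

/-- The class of monomorphisms whose cokernel is isomorphic to an object of `S`. -/
def monoWithCokerIn (S : Set C) : MorphismProperty C :=
  fun _ _ f => Mono f ∧ ∃ W ∈ S, Nonempty (cokernel f ≅ W)

/-- `B` is `S`-filtered: `0 → B` is the transfinite composition of a `λ`-sequence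
starting at `0` whose successor maps are monomorphisms with cokernel isomorphic to an
object of `S`. -/
def IsSFiltered (S : Set C) (B : C) : Prop :=
  ∃ (l : Ordinal.{w}) (hl : 0 < l) (X : Set.Iio l ⥤ C),
    IsLambdaSequence X ∧ SuccMapsIn (monoWithCokerIn S) X ∧ IsZero (X.obj ⟨0, hl⟩) ∧
      ∃ (c : Cocone X) (_ : IsColimit c), Nonempty (c.pt ≅ B)

/-- `Cell(I)`: the objects `A` such that `0 ⟶ A` is a relative `I`-cell complex. -/
def CellObjects (I : MorphismProperty C) : Set C :=
  {A | cell.{w} I (0 : (0 : C) ⟶ A)}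

/-- `Cok I`: the objects isomorphic to the cokernel of some morphism of `I`. -/
def CokObjects (I : MorphismProperty C) : Set C :=
  {A | ∃ (X Y : C) (i : X ⟶ Y), I i ∧ Nonempty (A ≅ cokernel i)}

/-- `I` is homological: whenever `A ⟶ 0` lies in `I`-inj, `A ∈ (Cok I)^⊥₁`. -/
def IsHomological (I : MorphismProperty C) : Prop :=
  ∀ A : C, inj I (0 : A ⟶ (0 : C)) → A ∈ rightPerp (CokObjects I)

/-- `(𝒳, 𝒴)` is a cotorsion pair: `𝒳 = ⊥₁𝒴` and `𝒴 = 𝒳^⊥₁`. -/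
def IsCotorsionPair (𝒳 𝒴 : Set C) : Prop :=
  𝒳 = leftPerp 𝒴 ∧ 𝒴 = rightPerp 𝒳

/-- The cotorsion pair `(𝒳, 𝒴)` is complete: it is a cotorsion pair with enough
projectives and enough injectives. -/
def IsCompleteCotorsionPair (𝒳 𝒴 : Set C) : Prop :=
  IsCotorsionPair 𝒳 𝒴 ∧
    (∀ A : C, ∃ (Y₀ X₀ : C) (f : Y₀ ⟶ X₀) (g : X₀ ⟶ A),
      IsShortExact f g ∧ X₀ ∈ 𝒳 ∧ Y₀ ∈ 𝒴) ∧
    (∀ A : C, ∃ (Y₀ X₀ : C) (f : A ⟶ Y₀) (g : Y₀ ⟶ X₀),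
      IsShortExact f g ∧ X₀ ∈ 𝒳 ∧ Y₀ ∈ 𝒴)

/-- `T` is a class of generators: every object admits an epimorphism from a coproduct of
a set-indexed family of objects of `T`. -/
def IsGeneratingClass (T : Set C) : Prop :=
  ∀ A : C, ∃ (S : Type w) (G : S → C) (_ : ∀ s, G s ∈ T)
    (c : Cofan G) (_ : IsColimit c) (p : c.pt ⟶ A), Epi p

/-- `T` is closed under (set-indexed) coproducts: coproducts of families of objects of
`T` exist and belong to `T`. -/
def ClosedUnderCoproducts (T : Set C) : Prop :=
  ∀ (S : Type w) (A : S → C), (∀ s, A s ∈ T) →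
    ∃ (c : Cofan A) (_ : IsColimit c), c.pt ∈ T

/-- `T` is closed under extensions. -/
def ClosedUnderExtensions (T : Set C) : Prop :=
  ∀ ⦃A B C' : C⦄ (f : A ⟶ B) (g : B ⟶ C'),
    IsShortExact f g → A ∈ T → C' ∈ T → B ∈ T

/-- `A` is a direct summand of `B`. -/
def IsDirectSummandOf (A B : C) : Prop :=
  ∃ (s : A ⟶ B) (r : B ⟶ A), s ≫ r = 𝟙 A

end AbelianComplete

section EklofAux

variable {C : Type u} [Category.{v} C] [Abelian C]

lemma isShortExact_comp_iso {A E B B' : C} (f : A ⟶ E) (g : E ⟶ B) (φ : B ≅ B')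
    (h : IsShortExact f g) : IsShortExact f (g ≫ φ.hom) := by
  obtain ⟨w, hw⟩ := h
  refine ⟨by rw [← Category.assoc, w, zero_comp], ?_⟩
  exact ShortComplex.shortExact_of_iso
    (ShortComplex.isoMk (Iso.refl A) (Iso.refl E) φ (by simp) (by simp)) hw

lemma ext1Zero_of_iso {X X' A : C} (e : X ≅ X') (h : Ext1Zero X A) : Ext1Zero X' A := by
  intro E f g hfg
  obtain ⟨s, hs⟩ := h f (g ≫ e.inv) (isShortExact_comp_iso f g e.symm hfg)
  refine ⟨e.inv ≫ s, ?_⟩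
  have : s ≫ g = e.hom := by
    have := hs =≫ e.hom
    simpa using this
  rw [Category.assoc, this, e.inv_hom_id]

lemma extend_section {A E B X' X'' : C} (f : A ⟶ E) (g : E ⟶ B)
    (hfg : IsShortExact f g) (i : X' ⟶ X'') (hi : Mono i)
    (hcok : Ext1Zero (cokernel i) A) (u : X'' ⟶ B) (t : X' ⟶ E)
    (ht : t ≫ g = i ≫ u) : ∃ t' : X'' ⟶ E, i ≫ t' = t ∧ t' ≫ g = u := by
  obtain ⟨w, hSE⟩ := hfg
  haveI : Mono f := hSE.mono_f
  haveI : Epi g := hSE.epi_g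
  -- the pullback
  set p₁ : pullback g u ⟶ E := pullback.fst g u with hp₁
  set p₂ : pullback g u ⟶ X'' := pullback.snd g u with hp₂
  haveI : Epi p₂ := by rw [hp₂]; infer_instance
  have hf'' : f ≫ g = (0 : A ⟶ X'') ≫ u := by rw [w, zero_comp]
  set f'' : A ⟶ pullback g u := pullback.lift f 0 hf'' with hf''def
  have hf''p₁ : f'' ≫ p₁ = f := pullback.lift_fst _ _ _
  have hf''p₂ : f'' ≫ p₂ = 0 := pullback.lift_snd _ _ _
  haveI : Mono f'' := by
    have : Mono (f'' ≫ p₁) := by rw [hf''p₁]; infer_instance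
    exact mono_of_mono f'' p₁
  set S₂ := ShortComplex.mk f'' p₂ hf''p₂ with hS₂def
  have hS₂ : S₂.Exact := by
    rw [ShortComplex.exact_iff_exact_up_to_refinements]
    intro T x hx
    have hxg : (x ≫ p₁) ≫ g = 0 := by
      rw [Category.assoc, pullback.condition, ← Category.assoc, hx, zero_comp]
    obtain ⟨T', π, hπ, y, hy⟩ :=
      (ShortComplex.exact_iff_exact_up_to_refinements _).1 hSE.exact (x ≫ p₁) hxg
    have hx' : x ≫ p₂ = 0 := hx
    refine ⟨T', π, hπ, y, ?_⟩
    apply pullback.hom_ext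
    · show (π ≫ x) ≫ p₁ = (y ≫ f'') ≫ p₁
      rw [Category.assoc, Category.assoc, hf''p₁]
      exact hy
    · show (π ≫ x) ≫ p₂ = (y ≫ f'') ≫ p₂
      rw [Category.assoc, Category.assoc, hf''p₂, comp_zero, hx', comp_zero]
  haveI : Epi S₂.g := by dsimp [S₂]; infer_instance
  haveI : Mono S₂.f := by dsimp [S₂]; infer_instance
  -- the map k
  set k : X' ⟶ pullback g u := pullback.lift t i ht with hkdef
  have hkp₁ : k ≫ p₁ = t := pullback.lift_fst _ _ _
  have hkp₂ : k ≫ p₂ = i := pullback.lift_snd _ _ _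
  haveI : Mono k := by
    have : Mono (k ≫ p₂) := by rw [hkp₂]; infer_instance
    exact mono_of_mono k p₂
  -- the cokernel short exact sequence
  set κ := cokernel.π k with hκdef
  set j : A ⟶ cokernel k := f'' ≫ κ with hjdef
  have hbar : k ≫ p₂ ≫ cokernel.π i = 0 := by
    rw [← Category.assoc, hkp₂, cokernel.condition]
  set pb : cokernel k ⟶ cokernel i := cokernel.desc k (p₂ ≫ cokernel.π i) hbar with hpbdef
  have hκpb : κ ≫ pb = p₂ ≫ cokernel.π i := cokernel.π_desc _ _ _
  have hjpb : j ≫ pb = 0 := by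
    rw [hjdef, Category.assoc, hκpb, ← Category.assoc, hf''p₂, zero_comp]
  have hSk : (ShortComplex.mk k κ (cokernel.condition k)).Exact :=
    ShortComplex.exact_of_g_is_cokernel _ (cokernelIsCokernel k)
  have hSi : (ShortComplex.mk i (cokernel.π i) (cokernel.condition i)).Exact :=
    ShortComplex.exact_of_g_is_cokernel _ (cokernelIsCokernel i)
  haveI hmono_j : Mono j := by
    apply Preadditive.mono_of_cancel_zero
    intro T y hy
    obtain ⟨T', π', hπ', z, hz⟩ :=
      (ShortComplex.exact_iff_exact_up_to_refinements _).1 hSk (y ≫ f'')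
        (show (y ≫ f'') ≫ κ = 0 by rw [Category.assoc, ← hjdef, hy])
    have hz : π' ≫ (y ≫ f'') = z ≫ k := hz
    have hz0 : z = 0 := by
      have : z ≫ i = 0 := by
        rw [← hkp₂, ← Category.assoc, ← hz]
        simp only [Category.assoc, hf''p₂, comp_zero]
      exact zero_of_comp_mono i this
    have : (π' ≫ y) ≫ f'' = 0 := by rw [Category.assoc, hz, hz0, zero_comp]
    have : π' ≫ y = 0 := zero_of_comp_mono f'' this
    exact zero_of_epi_comp π' this
  haveI : Epi pb := by
    have : Epi (κ ≫ pb) := by rw [hκpb]; infer_instance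
    exact epi_of_epi κ pb
  set S₃ := ShortComplex.mk j pb hjpb with hS₃def
  haveI : Mono S₃.f := hmono_j
  haveI : Epi S₃.g := by dsimp [S₃]; infer_instance
  have hS₃ : S₃.Exact := by
    rw [ShortComplex.exact_iff_exact_up_to_refinements]
    intro T x hx
    have hx' : x ≫ pb = 0 := hx
    obtain ⟨T₁, π₁, hπ₁, x₁, hx₁⟩ := surjective_up_to_refinements_of_epi κ x
    have h1 : (x₁ ≫ p₂) ≫ cokernel.π i = 0 := by
      rw [Category.assoc, ← hκpb, ← Category.assoc, ← hx₁, Category.assoc, hx', comp_zero]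
    obtain ⟨T₂, π₂, hπ₂, z, hz⟩ :=
      (ShortComplex.exact_iff_exact_up_to_refinements _).1 hSi (x₁ ≫ p₂) h1
    have hz : π₂ ≫ (x₁ ≫ p₂) = z ≫ i := hz
    have h2 : (π₂ ≫ x₁ - z ≫ k) ≫ p₂ = 0 := by
      rw [Preadditive.sub_comp, Category.assoc, Category.assoc, hkp₂, ← hz]
      simp
    obtain ⟨T₃, π₃, hπ₃, w', hw'⟩ :=
      (ShortComplex.exact_iff_exact_up_to_refinements _).1 hS₂ (π₂ ≫ x₁ - z ≫ k) h2
    have hw' : π₃ ≫ (π₂ ≫ x₁ - z ≫ k) = w' ≫ f'' := hw'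
    refine ⟨T₃, π₃ ≫ π₂ ≫ π₁, epi_comp _ _, w', ?_⟩
    show (π₃ ≫ π₂ ≫ π₁) ≫ x = w' ≫ j
    have hx₁' : π₃ ≫ π₂ ≫ x₁ = w' ≫ f'' + π₃ ≫ z ≫ k := by
      have h := hw'
      rw [Preadditive.comp_sub, sub_eq_iff_eq_add] at h
      simpa only [Category.assoc] using h
    have h0 : π₃ ≫ z ≫ k ≫ κ = 0 := by
      rw [hκdef, cokernel.condition]
      simp
    calc (π₃ ≫ π₂ ≫ π₁) ≫ x = π₃ ≫ π₂ ≫ x₁ ≫ κ := by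
          simp only [Category.assoc]; rw [hx₁]
      _ = (π₃ ≫ π₂ ≫ x₁) ≫ κ := by simp only [Category.assoc]
      _ = (w' ≫ f'' + π₃ ≫ z ≫ k) ≫ κ := by rw [hx₁']
      _ = w' ≫ f'' ≫ κ + π₃ ≫ z ≫ k ≫ κ := by
          rw [Preadditive.add_comp]; simp only [Category.assoc]
      _ = w' ≫ j := by rw [h0, add_zero, hjdef]
  -- apply the Ext hypothesis to S₃
  obtain ⟨s, hs⟩ := hcok j pb ⟨hjpb, ⟨hS₃⟩⟩
  set sp := ShortComplex.Splitting.ofExactOfSection S₃ hS₃ s hs hmono_j with hspdef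
  have hfr : j ≫ sp.r = 𝟙 A := sp.f_r
  set τ : pullback g u ⟶ A := κ ≫ sp.r with hτdef
  have hfτ : f'' ≫ τ = 𝟙 A := by rw [hτdef, ← Category.assoc, ← hjdef, hfr]
  have hkτ : k ≫ τ = 0 := by rw [hτdef, ← Category.assoc, cokernel.condition, zero_comp]
  have hfe : f'' ≫ (𝟙 (pullback g u) - τ ≫ f'') = 0 := by
    rw [Preadditive.comp_sub, Category.comp_id, ← Category.assoc, hfτ, Category.id_comp, sub_self]
  set σ : X'' ⟶ pullback g u := hS₂.desc (𝟙 (pullback g u) - τ ≫ f'') hfe with hσdef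
  have hp₂σ : p₂ ≫ σ = 𝟙 (pullback g u) - τ ≫ f'' := hS₂.g_desc _ _
  have hiσ : i ≫ σ = k := by
    rw [← hkp₂, Category.assoc, hp₂σ, Preadditive.comp_sub, Category.comp_id,
      ← Category.assoc, hkτ, zero_comp, sub_zero]
  have hσp₂ : σ ≫ p₂ = 𝟙 X'' := by
    rw [← cancel_epi p₂, ← Category.assoc, hp₂σ, Preadditive.sub_comp, Category.id_comp,
      Category.assoc, hf''p₂, comp_zero, sub_zero, Category.comp_id]
  refine ⟨σ ≫ p₁, ?_, ?_⟩
  · rw [← Category.assoc, hiσ, hkp₁]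
  · rw [Category.assoc, pullback.condition, ← Category.assoc, hσp₂, Category.id_comp]

end EklofAux

/-- **Eklof's Lemma.** In an abelian category, the class
`⊥₁{A} = {X : Ext¹(X, A) = 0}` is closed under `⊥₁{A}`-filtered objects: if `B` is
`⊥₁{A}`-filtered then `Ext¹(B, A) = 0`. -/
theorem eklof {C : Type u} [Category.{v} C] [Abelian C] (A B : C)
    (hB : IsSFiltered.{w} {X : C | Ext1Zero X A} B) : Ext1Zero B A := by
  classical
  obtain ⟨l, hl, X, hseq, hsucc, hX0, c, hc, ⟨e⟩⟩ := hB
  intro E f g hfg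
  set g' : E ⟶ c.pt := g ≫ e.inv with hg'def
  have hfg' : IsShortExact f g' := isShortExact_comp_iso f g e.symm hfg
  -- the type of partial compatible families of liftings
  let T := Σ' (d : Ordinal.{w}) (_ : d ≤ l)
    (s : ∀ (a : Set.Iio l), a.1 < d → (X.obj a ⟶ E)),
    (∀ (a : Set.Iio l) (ha : a.1 < d), s a ha ≫ g' = c.ι.app a) ∧
    (∀ (a b : Set.Iio l) (hab : a ≤ b) (ha : a.1 < d) (hb : b.1 < d),
       X.map (homOfLE hab) ≫ s b hb = s a ha)
  let r : T → T → Prop := fun p q =>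
    ∃ h : p.1 ≤ q.1, ∀ (a : Set.Iio l) (ha : a.1 < p.1),
      q.2.2.1 a (lt_of_lt_of_le ha h) = p.2.2.1 a ha
  have rtrans : ∀ {p q t : T}, r p q → r q t → r p t := by
    rintro p q t ⟨h1, e1⟩ ⟨h2, e2⟩
    exact ⟨h1.trans h2, fun a ha => (e2 a (lt_of_lt_of_le ha h1)).trans (e1 a ha)⟩
  have agree : ∀ {ch : Set T}, IsChain r ch → ∀ p ∈ ch, ∀ q ∈ ch,
      ∀ (a : Set.Iio l) (hpa : a.1 < p.1) (hqa : a.1 < q.1),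
      p.2.2.1 a hpa = q.2.2.1 a hqa := by
    intro ch hch p hp q hq a hpa hqa
    rcases eq_or_ne p q with rfl | hne
    · rfl
    · rcases hch hp hq hne with ⟨h, e'⟩ | ⟨h, e'⟩
      · exact (e' a hpa).symm
      · exact e' a hqa
  have hbound : ∀ ch : Set T, IsChain r ch → ∃ ub, ∀ p ∈ ch, r p ub := by
    intro ch hch
    have hBdd : BddAbove ((fun p : T => p.1) '' ch) :=
      ⟨l, by rintro _ ⟨q, hq, rfl⟩; exact q.2.1⟩
    set dstar := sSup ((fun p : T => p.1) '' ch) with hds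
    have hdl : dstar ≤ l := csSup_le' (by rintro _ ⟨p, hp, rfl⟩; exact p.2.1)
    have hex : ∀ (a : Set.Iio l), a.1 < dstar → ∃ p, p ∈ ch ∧ a.1 < p.1 := by
      intro a ha
      by_contra hcon
      push_neg at hcon
      have : dstar ≤ a.1 := csSup_le' (by rintro _ ⟨p, hp, rfl⟩; exact hcon p hp)
      exact absurd (lt_of_lt_of_le ha this) (lt_irrefl _)
    choose P hP₁ hP₂ using hex
    refine ⟨⟨dstar, hdl, fun a ha => (P a ha).2.2.1 a (hP₂ a ha), ?_, ?_⟩, ?_⟩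
    · intro a ha
      exact (P a ha).2.2.2.1 a (hP₂ a ha)
    · intro a b hab ha hb
      have h1 : a.1 < (P b hb).1 := lt_of_le_of_lt hab (hP₂ b hb)
      beta_reduce
      rw [agree hch (P a ha) (hP₁ a ha) (P b hb) (hP₁ b hb) a (hP₂ a ha) h1]
      exact (P b hb).2.2.2.2 a b hab h1 (hP₂ b hb)
    · intro p hp
      have hple : p.1 ≤ dstar := le_csSup hBdd ⟨p, hp, rfl⟩
      exact ⟨hple, fun a ha =>
        agree hch (P a (lt_of_lt_of_le ha hple)) (hP₁ a (lt_of_lt_of_le ha hple))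
          p hp a (hP₂ a (lt_of_lt_of_le ha hple)) ha⟩
  obtain ⟨m, hm⟩ :=
    exists_maximal_of_chains_bounded hbound (fun h1 h2 => rtrans h1 h2)
  obtain ⟨d, hdle, s, hs1, hs2⟩ := m
  have hdeq : d = l := by
    by_contra hne
    have hd : d < l := lt_of_le_of_ne hdle hne
    have hstep : ∃ sd : X.obj ⟨d, hd⟩ ⟶ E,
        sd ≫ g' = c.ι.app ⟨d, hd⟩ ∧
        ∀ (a : Set.Iio l) (ha : a.1 < d),
          X.map (homOfLE (show a ≤ ⟨d, hd⟩ from le_of_lt ha)) ≫ sd = s a ha := by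
      rcases Ordinal.zero_or_succ_or_isSuccLimit d with h0 | ⟨a₀, hsd⟩ | hlim
      · subst h0
        have hz : IsZero (X.obj ⟨0, hd⟩) := hX0
        refine ⟨0, hz.eq_of_src _ _, ?_⟩
        intro a ha
        exact absurd ha (not_lt_of_ge zero_le)
      · rw [← Ordinal.add_one_eq_succ] at hsd
        subst hsd
        have hsl : a₀ + 1 < l := hd
        obtain ⟨hmono, W, hW, ⟨eW⟩⟩ := hsucc a₀ hsl
        have ha₀l : a₀ < l := (lt_add_one a₀).trans hsl
        have ha₀d : a₀ < a₀ + 1 := lt_add_one a₀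
        obtain ⟨t', ht'1, ht'2⟩ := extend_section f g' hfg'
          (X.map (toSucc a₀ hsl)) hmono (ext1Zero_of_iso eW.symm hW)
          (c.ι.app ⟨a₀ + 1, hsl⟩) (s ⟨a₀, ha₀l⟩ ha₀d)
          (by rw [hs1 ⟨a₀, ha₀l⟩ ha₀d]; exact (c.w (toSucc a₀ hsl)).symm)
        refine ⟨t', ht'2, ?_⟩
        intro a ha
        have haa₀ : a ≤ (⟨a₀, ha₀l⟩ : Set.Iio l) := by
          have : a.1 ≤ a₀ := by
            rw [Ordinal.add_one_eq_succ] at ha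
            exact Order.lt_succ_iff.1 ha
          exact this
        have hcmp : (homOfLE (show a ≤ ⟨a₀ + 1, hd⟩ from le_of_lt ha)) =
            homOfLE haa₀ ≫ toSucc a₀ hsl := Subsingleton.elim _ _
        rw [hcmp, X.map_comp, Category.assoc, ht'1]
        exact hs2 a ⟨a₀, ha₀l⟩ haa₀ ha ha₀d
      · obtain ⟨hcolim⟩ := hseq d hd hlim
        let K : Cocone (iioFunctor hd.le ⋙ X) :=
          { pt := E
            ι :=
              { app := fun b => s ⟨b.1, lt_trans b.2 hd⟩ b.2
                naturality := fun b b' hbb' => by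
                  have hle : (⟨b.1, lt_trans b.2 hd⟩ : Set.Iio l) ≤
                      ⟨b'.1, lt_trans b'.2 hd⟩ := leOfHom hbb'
                  dsimp only [Functor.comp_map, Functor.const_obj_map]
                  show _ ≫ _ = _ ≫ 𝟙 _
                  erw [Category.comp_id]
                  rw [Subsingleton.elim ((iioFunctor hd.le).map hbb') (homOfLE hle)]
                  exact hs2 _ _ hle b.2 b'.2 } }
        refine ⟨hcolim.desc K, ?_, ?_⟩
        · apply hcolim.hom_ext
          intro b
          erw [← Category.assoc, hcolim.fac]
          show s ⟨b.1, lt_trans b.2 hd⟩ b.2 ≫ g' =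
            X.map (homOfLE (le_of_lt b.2)) ≫ c.ι.app ⟨d, hd⟩
          erw [hs1, c.w]
        · intro a ha
          exact hcolim.fac K ⟨a.1, ha⟩
    obtain ⟨sd, hsd1, hsd2⟩ := hstep
    have hd1l : d + 1 ≤ l := by
      rw [Ordinal.add_one_eq_succ]
      exact Order.succ_le_of_lt hd
    have hlt : ∀ (a : Set.Iio l), a.1 < d + 1 → a ≤ (⟨d, hd⟩ : Set.Iio l) := by
      intro a ha
      have : a.1 ≤ d := by
        rw [Ordinal.add_one_eq_succ] at ha
        exact Order.lt_succ_iff.1 ha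
      exact this
    have hq1 : ∀ (a : Set.Iio l) (ha : a.1 < d + 1),
        (X.map (homOfLE (hlt a ha)) ≫ sd) ≫ g' = c.ι.app a := by
      intro a ha
      rw [Category.assoc, hsd1, c.w]
    have hq2 : ∀ (a b : Set.Iio l) (hab : a ≤ b) (ha : a.1 < d + 1) (hb : b.1 < d + 1),
        X.map (homOfLE hab) ≫ (X.map (homOfLE (hlt b hb)) ≫ sd) =
          X.map (homOfLE (hlt a ha)) ≫ sd := by
      intro a b hab ha hb
      rw [← Category.assoc, ← X.map_comp, homOfLE_comp]
    have hrmq : r ⟨d, hdle, s, hs1, hs2⟩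
        ⟨d + 1, hd1l, fun a ha => X.map (homOfLE (hlt a ha)) ≫ sd, hq1, hq2⟩ := by
      refine ⟨le_of_lt (lt_add_one d), ?_⟩
      intro a ha
      exact hsd2 a ha
    obtain ⟨hle', -⟩ := hm _ hrmq
    exact absurd hle' (not_le.2 (lt_add_one d))
  subst hdeq
  let K : Cocone X :=
    { pt := E
      ι :=
        { app := fun a => s a a.2
          naturality := fun a b hab => by
            dsimp only [Functor.const_obj_map]
            show _ ≫ _ = _ ≫ 𝟙 _
            rw [Category.comp_id]
            rw [Subsingleton.elim hab (homOfLE (leOfHom hab))]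
            exact hs2 a b (leOfHom hab) a.2 b.2 } }
  have hσg : (hc.desc K) ≫ g' = 𝟙 c.pt := by
    apply hc.hom_ext
    intro a
    show _ ≫ _ = _ ≫ 𝟙 _
    rw [Category.comp_id]
    rw [← Category.assoc, hc.fac]
    exact hs1 a a.2
  refine ⟨e.inv ≫ hc.desc K, ?_⟩
  have hdg : hc.desc K ≫ g = e.hom := by
    have h2 := hσg =≫ e.hom
    rw [hg'def] at h2
    simpa using h2
  rw [Category.assoc, hdg, e.inv_hom_id]

end CellComplex
end

section
/- Let A be an abelian category and I a set of monomorphisms in A that admits the small object argument. Then Cell(I) ⊆ Filt-Cok I: every I-cell complex is a Cok I-filtered object. -/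
open CategoryTheory CategoryTheory.Limits

universe w v u

namespace CellComplex

variable {C : Type u} [Category.{v} C]

/- In an abelian category, a pushout square induces an isomorphism of cokernels. -/
noncomputable def cokernelIsoOfIsPushout {C : Type u} [Category.{v} C] [Abelian C]
    {A B X Y : C} {d : A ⟶ B} {g : A ⟶ X} {h : B ⟶ Y} {f : X ⟶ Y}
    (hp : IsPushout d g h f) : cokernel f ≅ cokernel d := by
  have hw : d ≫ (h ≫ cokernel.π f) = 0 := by
    rw [← Category.assoc, hp.w, Category.assoc, cokernel.condition, comp_zero]
  let u : cokernel d ⟶ cokernel f := cokernel.desc d (h ≫ cokernel.π f) hw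
  have hw' : d ≫ cokernel.π d = g ≫ (0 : X ⟶ cokernel d) := by
    rw [cokernel.condition, comp_zero]
  let w : Y ⟶ cokernel d := hp.desc (cokernel.π d) 0 hw'
  have hfw : f ≫ w = 0 := hp.inr_desc _ _ _
  have hhw : h ≫ w = cokernel.π d := hp.inl_desc _ _ _
  let v : cokernel f ⟶ cokernel d := cokernel.desc f w hfw
  refine ⟨v, u, ?_, ?_⟩
  · apply coequalizer.hom_ext
    rw [Category.comp_id]
    have : cokernel.π f ≫ v ≫ u = w ≫ u := by
      rw [← Category.assoc, cokernel.π_desc]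
    rw [this]
    apply hp.hom_ext
    · rw [← Category.assoc, hhw]
      exact (cokernel.π_desc d _ hw).trans rfl
    · rw [← Category.assoc, hfw, zero_comp, cokernel.condition]
  · apply coequalizer.hom_ext
    rw [Category.comp_id, ← Category.assoc, cokernel.π_desc, Category.assoc,
      cokernel.π_desc, hhw]

/-- If `I` is a set of monomorphisms of an abelian category admitting
the small object argument, then `Cell(I) ⊆ Filt-Cok I`: every `I`-cell complex is a
`Cok I`-filtered object. -/
theorem cellObjects_subset_filtered {C : Type u} [Category.{v} C] [Abelian C]
    (I : MorphismProperty C) (hmono : ∀ ⦃X Y : C⦄ (i : X ⟶ Y), I i → Mono i)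
    (hI : AdmitsSmallObjectArgument.{w} I) :
    ∀ A ∈ CellObjects.{w} I, IsSFiltered.{w} (CokObjects I) A := by
  intro A hA
  obtain ⟨l, hl, X, hseq, hsucc, c, hc, e₀, e₁, -⟩ := hA
  refine ⟨l, hl, X, hseq, ?_, (isZero_zero C).of_iso e₀.symm, c, hc, ⟨e₁⟩⟩
  intro a ha
  obtain ⟨P, Q, d, g, h, hd, hp⟩ := hsucc a ha
  have : Mono d := hmono d hd
  refine ⟨Abelian.mono_inr_of_isColimit _ _ hp.isColimit, cokernel d, ⟨P, Q, d, hd, ⟨Iso.refl _⟩⟩,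
    ⟨cokernelIsoOfIsPushout hp⟩⟩

end CellComplex
end
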